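/- Let 0 < μ̂ ≤ L̂, α = 4/(√L̂ + √μ̂)², κ̂ = √(L̂/μ̂), β = ((κ̂−1)/(κ̂+1))². Then for every s ∈ [μ̂, L̂], the discriminant (1+β−αs)² − 4β ≤ 0. -/
import Mathlib


theorem discriminant_nonpos_on_interval (muh Lh : ℝ) (hmu : 0 < muh) (hL : muh ≤ Lh)
    (α κ β : ℝ)
    (hα : α = 4 / (Real.sqrt Lh + Real.sqrt muh) ^ 2)
    (hκ : κ = Real.sqrt (Lh / muh))
    (hβ : β = ((κ - 1) / (κ + 1)) ^ 2) :
    ∀ s ∈ Set.Icc muh Lh, (1 + β - α * s) ^ 2 - 4 * β ≤ 0 := by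
  intro s hs
  obtain ⟨hs1, hs2⟩ := hs
  set a := Real.sqrt muh with hadef
  set b := Real.sqrt Lh with hbdef
  have ha : 0 < a := Real.sqrt_pos.2 hmu
  have hb : 0 < b := Real.sqrt_pos.2 (lt_of_lt_of_le hmu hL)
  have ha2 : a ^ 2 = muh := Real.sq_sqrt hmu.le
  have hb2 : b ^ 2 = Lh := Real.sq_sqrt (hmu.le.trans hL)
  have hκ' : κ = b / a := by
    rw [hκ, Real.sqrt_div (hmu.le.trans hL)]
  have hab : a + b ≠ 0 := by positivity
  have hβ' : β = ((b - a) / (b + a)) ^ 2 := by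
    rw [hβ, hκ']
    congr 1
    have h1 : b / a + 1 ≠ 0 := by
      have : 0 < b / a + 1 := by positivity
      linarith
    field_simp
  have key : (1 + β - α * s) ^ 2 - 4 * β = 16 * ((a ^ 2 - s) * (b ^ 2 - s)) / (a + b) ^ 4 := by
    rw [hα, hβ']
    have hba : b + a ≠ 0 := by positivity
    field_simp
    ring
  rw [key]
  apply div_nonpos_of_nonpos_of_nonneg
  · nlinarith
  · positivity
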